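/- In the Colonel Blotto game with favoritism, if battlefield i satisfies p_i ≥ 0 and q_i·w_i·κ_B − p_i > w_i·κ_A for some κ_A, κ_B > 0, and Player A's allocation A_i has CDF F(x) = 1 − κ_A/(q_i κ_B) + x/(q_i w_i κ_B) on [0, w_i κ_A] (F = 1 beyond), while Player B's allocation B_i is uniform on [p_i/q_i, (w_i κ_A + p_i)/q_i], with A_i, B_i independent, then Player A's expected gain w_i·P(A_i > q_i·B_i − p_i) equals w_i·κ_A/(2·q_i·κ_B). -/

import Mathlib

open MeasureTheory ProbabilityTheory Set
open scoped ProbabilityTheory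

/-- Battlefield `i` with `p_i ≥ 0` and `q_i·w_i·κ_B − p_i > w_i·κ_A`: if `A_i` follows the
stated distribution and `B_i` is uniform on `[p/q, (w·κ_A + p)/q]`, independently, then
Player A's expected gain is `w·κ_A/(2·q·κ_B)`. -/
theorem stmt_15 {Ω : Type*} [MeasureSpace Ω] [IsProbabilityMeasure (ℙ : Measure Ω)]
    (w p q κA κB : ℝ) (hw : 0 < w) (hq : 0 < q) (hκA : 0 < κA) (hκB : 0 < κB)
    (hp : 0 ≤ p) (hcase : w * κA < q * w * κB - p)
    (A B : Ω → ℝ) (hAmeas : Measurable A) (hBmeas : Measurable B)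
    (hindep : IndepFun A B ℙ)
    (hAcdf : ∀ x : ℝ, ℙ {ω | A ω ≤ x} = ENNReal.ofReal
      (if x < 0 then 0
       else if x ≤ w * κA then 1 - κA / (q * κB) + x / (q * w * κB)
       else 1))
    (hBcdf : ∀ x : ℝ, ℙ {ω | B ω ≤ x} = ENNReal.ofReal
      (min (max ((q * x - p) / (w * κA)) 0) 1)) :
    w * (ℙ {ω | q * B ω - p < A ω}).toReal = w * κA / (2 * q * κB) := by
  have hκ : κA < q * κB := by nlinarith
  set c := w * κA with hc
  have hc0 : 0 < c := by positivity
  set μA : Measure ℝ := ENNReal.ofReal (1 - κA / (q * κB)) • Measure.dirac 0 +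
      ENNReal.ofReal (1 / (q * w * κB)) • volume.restrict (Ioc 0 c) with hμA
  set μB : Measure ℝ := ENNReal.ofReal (q / c) • volume.restrict (Ioc (p/q) ((c+p)/q)) with hμB
  -- value of μA on Iic
  have hAIic : ∀ x : ℝ, μA (Iic x) = ENNReal.ofReal
      (if x < 0 then 0
       else if x ≤ w * κA then 1 - κA / (q * κB) + x / (q * w * κB)
       else 1) := by
    intro x
    rw [hμA]
    simp only [Measure.add_apply, Measure.smul_apply, smul_eq_mul,
      Measure.restrict_apply measurableSet_Iic, Measure.dirac_apply' _ measurableSet_Iic]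
    rcases lt_or_ge x 0 with hx | hx
    · rw [if_pos hx]
      have h1 : (0:ℝ) ∉ Iic x := by simpa using hx.not_ge
      have h2 : Iic x ∩ Ioc 0 c = ∅ := by
        ext y; simp only [mem_inter_iff, mem_Iic, mem_Ioc, mem_empty_iff_false, iff_false]
        rintro ⟨h, h', _⟩; linarith
      simp [h1, h2]
    · rw [if_neg (not_lt.2 hx)]
      have h1 : (0:ℝ) ∈ Iic x := by simpa using hx
      rcases le_or_gt x c with hxc | hxc
      · rw [if_pos hxc]
        have h2 : Iic x ∩ Ioc 0 c = Ioc 0 x := by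
          ext y; simp only [mem_inter_iff, mem_Iic, mem_Ioc]
          constructor
          · rintro ⟨h, h', _⟩; exact ⟨h', h⟩
          · rintro ⟨h, h'⟩; exact ⟨h', h, h'.trans hxc⟩
        rw [h2]
        simp only [h1, indicator_of_mem, Pi.one_apply, mul_one, Real.volume_Ioc, sub_zero]
        rw [← ENNReal.ofReal_mul (by positivity), ← ENNReal.ofReal_add]
        · congr 1; ring
        · have : κA / (q * κB) ≤ 1 := by
            rw [div_le_one (by positivity)]; linarith
          linarith
        · positivity
      · rw [if_neg hxc.not_ge]
        have h2 : Iic x ∩ Ioc 0 c = Ioc 0 c := by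
          ext y; simp only [mem_inter_iff, mem_Iic, mem_Ioc]
          constructor
          · rintro ⟨_, h'⟩; exact h'
          · rintro ⟨h, h'⟩; exact ⟨h'.trans hxc.le, h, h'⟩
        rw [h2]
        simp only [h1, indicator_of_mem, Pi.one_apply, mul_one, Real.volume_Ioc, sub_zero]
        rw [← ENNReal.ofReal_mul (by positivity), ← ENNReal.ofReal_add]
        · congr 1
          rw [hc]
          field_simp
          ring
        · have : κA / (q * κB) ≤ 1 := by
            rw [div_le_one (by positivity)]; linarith
          linarith
        · positivity
  -- value of μB on Iic
  have hBIic : ∀ x : ℝ, μB (Iic x) = ENNReal.ofReal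
      (min (max ((q * x - p) / (w * κA)) 0) 1) := by
    intro x
    rw [hμB]
    simp only [Measure.smul_apply, smul_eq_mul, Measure.restrict_apply measurableSet_Iic]
    rcases lt_or_ge x (p/q) with hx | hx
    · have h2 : Iic x ∩ Ioc (p/q) ((c+p)/q) = ∅ := by
        ext y; simp only [mem_inter_iff, mem_Iic, mem_Ioc, mem_empty_iff_false, iff_false]
        rintro ⟨h, h', _⟩; linarith
      have h3 : (q * x - p) / (w * κA) < 0 := by
        apply div_neg_of_neg_of_pos _ (by positivity)
        have := (lt_div_iff₀ hq).1 hx; nlinarith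
      rw [h2, max_eq_right h3.le]
      simp
    · rcases le_or_gt x ((c+p)/q) with hxc | hxc
      · have h2 : Iic x ∩ Ioc (p/q) ((c+p)/q) = Ioc (p/q) x := by
          ext y; simp only [mem_inter_iff, mem_Iic, mem_Ioc]
          constructor
          · rintro ⟨h, h', _⟩; exact ⟨h', h⟩
          · rintro ⟨h, h'⟩; exact ⟨h', h, h'.trans hxc⟩
        have h3 : 0 ≤ (q * x - p) / (w * κA) := by
          apply div_nonneg _ (by positivity)
          have := (div_le_iff₀ hq).1 hx; nlinarith
        have h4 : (q * x - p) / (w * κA) ≤ 1 := by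
          rw [div_le_one (by positivity)]
          have := (le_div_iff₀ hq).1 hxc; nlinarith
        rw [h2, max_eq_left h3, min_eq_left h4, Real.volume_Ioc,
          ← ENNReal.ofReal_mul (by positivity)]
        congr 1
        rw [hc]; field_simp
      · have h2 : Iic x ∩ Ioc (p/q) ((c+p)/q) = Ioc (p/q) ((c+p)/q) := by
          ext y; simp only [mem_inter_iff, mem_Iic, mem_Ioc]
          constructor
          · rintro ⟨_, h'⟩; exact h'
          · rintro ⟨h, h'⟩; exact ⟨h'.trans hxc.le, h, h'⟩
        have h4 : (1:ℝ) ≤ (q * x - p) / (w * κA) := by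
          rw [le_div_iff₀ (by positivity)]
          have := (div_lt_iff₀ hq).1 hxc; nlinarith
        have h3 : (0:ℝ) ≤ 1 := zero_le_one
        rw [h2, max_eq_left (h3.trans h4), min_eq_right h4, Real.volume_Ioc,
          ← ENNReal.ofReal_mul (by positivity)]
        congr 1
        rw [hc]; field_simp; ring
  -- identify the laws
  haveI : IsProbabilityMeasure (Measure.map A ℙ) := Measure.isProbabilityMeasure_map hAmeas.aemeasurable
  haveI : IsProbabilityMeasure (Measure.map B ℙ) := Measure.isProbabilityMeasure_map hBmeas.aemeasurable
  have hmapA : Measure.map A ℙ = μA := by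
    refine Measure.ext_of_Iic _ _ (fun x => ?_)
    rw [Measure.map_apply hAmeas measurableSet_Iic]
    exact (hAcdf x).trans (hAIic x).symm
  have hmapB : Measure.map B ℙ = μB := by
    refine Measure.ext_of_Iic _ _ (fun x => ?_)
    rw [Measure.map_apply hBmeas measurableSet_Iic]
    exact (hBcdf x).trans (hBIic x).symm
  haveI : SFinite μB := by rw [← hmapB]; infer_instance
  -- the event as a product-measure set
  have hS : MeasurableSet {x : ℝ × ℝ | q * x.2 - p < x.1} :=
    measurableSet_lt (by fun_prop) measurable_fst
  have key : ℙ {ω | q * B ω - p < A ω} = (μA.prod μB) {x : ℝ × ℝ | q * x.2 - p < x.1} := by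
    rw [← hmapA, ← hmapB,
      ← (indepFun_iff_map_prod_eq_prod_map_map hAmeas.aemeasurable hBmeas.aemeasurable).1 hindep,
      Measure.map_apply (hAmeas.prodMk hBmeas) hS]
    rfl
  -- compute the product measure
  have hpre : ∀ a : ℝ, (Prod.mk a ⁻¹' {x : ℝ × ℝ | q * x.2 - p < x.1}) = Iio ((a + p)/q) := by
    intro a
    ext b
    simp only [mem_preimage, mem_setOf_eq, mem_Iio, lt_div_iff₀ hq]
    constructor <;> intro h <;> linarith
  have hf0 : μB (Iio ((0 + p)/q)) = 0 := by
    rw [hμB]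
    simp only [Measure.smul_apply, smul_eq_mul, Measure.restrict_apply measurableSet_Iio]
    have : Iio ((0 + p)/q) ∩ Ioc (p/q) ((c+p)/q) = ∅ := by
      ext y
      simp only [mem_inter_iff, mem_Iio, mem_Ioc, mem_empty_iff_false, iff_false, zero_add]
      rintro ⟨h, h', _⟩; linarith
    rw [this]
    simp
  have hfa : ∀ a ∈ Ioc 0 c, μB (Iio ((a + p)/q)) = ENNReal.ofReal (a / c) := by
    intro a ha
    rw [hμB]
    simp only [Measure.smul_apply, smul_eq_mul, Measure.restrict_apply measurableSet_Iio]
    have h3 : (a+p)/q ≤ (c+p)/q := by gcongr; exact ha.2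
    have h2 : Iio ((a + p)/q) ∩ Ioc (p/q) ((c+p)/q) = Ioo (p/q) ((a+p)/q) := by
      ext y
      simp only [mem_inter_iff, mem_Iio, mem_Ioc, mem_Ioo]
      constructor
      · rintro ⟨h, h', _⟩; exact ⟨h', h⟩
      · rintro ⟨h, h'⟩; exact ⟨h', h, h'.le.trans h3⟩
    rw [h2, Real.volume_Ioo, ← ENNReal.ofReal_mul (by positivity)]
    congr 1
    field_simp
    ring
  -- integrate
  have hint : ∫⁻ a in Ioc 0 c, ENNReal.ofReal (a / c) = ENNReal.ofReal (c / 2) := by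
    rw [← ofReal_integral_eq_lintegral_ofReal]
    · congr 1
      rw [← intervalIntegral.integral_of_le hc0.le]
      rw [intervalIntegral.integral_div, integral_id]
      field_simp; ring
    · exact (continuous_id.div_const c).integrableOn_Ioc
    · filter_upwards [ae_restrict_mem measurableSet_Ioc] with a ha
      exact div_nonneg ha.1.le hc0.le
  have hprod : (μA.prod μB) {x : ℝ × ℝ | q * x.2 - p < x.1}
      = ENNReal.ofReal (1 / (q * w * κB)) * ENNReal.ofReal (c / 2) := by
    rw [Measure.prod_apply hS]
    simp only [hpre]
    rw [hμA, lintegral_add_measure, lintegral_smul_measure, lintegral_smul_measure,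
      lintegral_dirac, hf0, smul_zero, zero_add,
      setLIntegral_congr_fun measurableSet_Ioc
        (fun a ha => hfa a ha), hint, smul_eq_mul]
  -- wrap up
  rw [key, hprod, ← ENNReal.ofReal_mul (by positivity), ENNReal.toReal_ofReal (by positivity)]
  rw [hc]
  field_simp
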